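/- arXiv:2208.07323 — 4 statements merged into one kernel-verified Lean document; each statement's English description precedes it below -/
import Mathlib

section
/- Suppose all diagonal entries of D̄ are strictly positive (every node has nonzero signed degree). Then the normalized signed magnetic Laplacian L̄^q_n = D̄^{-1/2} L̄^q D̄^{-1/2} is Hermitian positive semidefinite. -/
open Matrix Complex ComplexOrder

private lemma myAbsMulSign (a : ℝ) : |a| * Real.sign a = a := by
  rcases lt_trichotomy a 0 with h | h | h
  · rw [Real.sign_of_neg h, abs_of_neg h]; ring
  · simp [h]
  · rw [Real.sign_of_pos h, abs_of_pos h]; ring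

private lemma myAbsMulSignSq (a : ℝ) : |a| * (Real.sign a * Real.sign a) = |a| := by
  rcases lt_trichotomy a 0 with h | h | h
  · rw [Real.sign_of_neg h]; ring
  · simp [h]
  · rw [Real.sign_of_pos h]; ring

private lemma conj_exp_theta {N : ℕ} (Θ : Matrix (Fin N) (Fin N) ℝ)
    (hΘ : ∀ i j, Θ i j = -Θ j i) (i j : Fin N) :
    (starRingEnd ℂ) (Complex.exp (Complex.I * (Θ i j : ℝ))) =
      Complex.exp (Complex.I * (Θ j i : ℝ)) := by
  rw [← Complex.exp_conj]
  congr 1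
  rw [_root_.map_mul, Complex.conj_I, Complex.conj_ofReal, hΘ i j]
  push_cast
  ring

private lemma pointwise {N : ℕ}
    (As : Matrix (Fin N) (Fin N) ℝ)
    (Θ : Matrix (Fin N) (Fin N) ℝ) (hΘ : ∀ i j, Θ i j = -Θ j i)
    (x : Fin N → ℂ) (i j : Fin N) :
    ((|As i j| : ℝ) : ℂ) *
      ((starRingEnd ℂ) (x i - ((Real.sign (As i j) : ℝ) : ℂ) * Complex.exp (Complex.I * (Θ i j : ℝ)) * x j) *
        (x i - ((Real.sign (As i j) : ℝ) : ℂ) * Complex.exp (Complex.I * (Θ i j : ℝ)) * x j))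
    = ((|As i j| : ℝ) : ℂ) * ((starRingEnd ℂ) (x i) * x i)
      + ((|As i j| : ℝ) : ℂ) * ((starRingEnd ℂ) (x j) * x j)
      - ((As i j : ℝ) : ℂ) * Complex.exp (Complex.I * (Θ j i : ℝ)) * (x i * (starRingEnd ℂ) (x j))
      - ((As i j : ℝ) : ℂ) * Complex.exp (Complex.I * (Θ i j : ℝ)) * ((starRingEnd ℂ) (x i) * x j) := by
  have h4 := conj_exp_theta Θ hΘ i j
  have h3 : Complex.exp (Complex.I * (Θ i j : ℝ)) * Complex.exp (Complex.I * (Θ j i : ℝ)) = 1 := by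
    rw [← Complex.exp_add, hΘ i j]
    push_cast
    ring_nf
    exact Complex.exp_zero
  have h1 : ((|As i j| : ℝ) : ℂ) * ((Real.sign (As i j) : ℝ) : ℂ) = ((As i j : ℝ) : ℂ) := by
    rw [← Complex.ofReal_mul, myAbsMulSign]
  have h2 : ((|As i j| : ℝ) : ℂ) * (((Real.sign (As i j) : ℝ) : ℂ) * ((Real.sign (As i j) : ℝ) : ℂ)) = ((|As i j| : ℝ) : ℂ) := by
    rw [← Complex.ofReal_mul, ← Complex.ofReal_mul, myAbsMulSignSq]
  simp only [map_sub, _root_.map_mul, Complex.conj_ofReal, h4]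
  set e1 := Complex.exp (Complex.I * (Θ i j : ℝ))
  set e2 := Complex.exp (Complex.I * (Θ j i : ℝ))
  linear_combination ((starRingEnd ℂ) (x j) * x j) * h2 * (e1 * e2)
    + ((starRingEnd ℂ) (x j) * x j * ((|As i j| : ℝ) : ℂ)) * h3
    - (e1 * (starRingEnd ℂ) (x i) * x j) * h1
    - (e2 * (x i) * (starRingEnd ℂ) (x j)) * h1

private lemma lap_psd {N : ℕ}
    (As : Matrix (Fin N) (Fin N) ℝ) (hAs : ∀ i j, As i j = As j i)
    (Θ : Matrix (Fin N) (Fin N) ℝ) (hΘ : ∀ i j, Θ i j = -Θ j i)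
    (L : Matrix (Fin N) (Fin N) ℂ)
    (hL : L = Matrix.diagonal (fun i => ((∑ j, |As i j| : ℝ) : ℂ)) -
      Matrix.of (fun i j => ((As i j : ℝ) : ℂ) * Complex.exp (Complex.I * (Θ i j : ℝ)))) :
    L.PosSemidef := by
  rw [Matrix.posSemidef_iff_dotProduct_mulVec]
  constructor
  · rw [hL]
    apply Matrix.IsHermitian.sub
    · exact Matrix.isHermitian_diagonal_of_self_adjoint _
        (funext fun i => Complex.conj_ofReal _)
    · show Matrix.IsHermitian _
      ext i j
      simp only [conjTranspose_apply, of_apply, Complex.star_def]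
      rw [_root_.map_mul, Complex.conj_ofReal, conj_exp_theta Θ hΘ j i, hAs j i]
  · intro x
    set u : Fin N → Fin N → ℂ := fun i j =>
      x i - ((Real.sign (As i j) : ℝ) : ℂ) * Complex.exp (Complex.I * (Θ i j : ℝ)) * x j with hu
    set R : ℝ := ∑ i, ∑ j, |As i j| * Complex.normSq (u i j) with hR
    have hRnn : 0 ≤ R := Finset.sum_nonneg fun i _ => Finset.sum_nonneg fun j _ =>
      mul_nonneg (abs_nonneg _) (Complex.normSq_nonneg _)
    -- the quadratic form
    have hQ : star x ⬝ᵥ L *ᵥ x =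
        (∑ i, ((∑ j, |As i j| : ℝ) : ℂ) * ((starRingEnd ℂ) (x i) * x i))
        - ∑ i, ∑ j, ((As i j : ℝ) : ℂ) * Complex.exp (Complex.I * (Θ i j : ℝ)) * ((starRingEnd ℂ) (x i) * x j) := by
      rw [hL, Matrix.sub_mulVec, dotProduct_sub]
      congr 1
      · simp only [dotProduct, Matrix.mulVec_diagonal, Pi.star_apply]
        refine Finset.sum_congr rfl fun i _ => ?_
        simp [mul_comm, mul_assoc, Complex.star_def]
        ring
      · simp only [dotProduct, Matrix.mulVec, Pi.star_apply, of_apply]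
        refine Finset.sum_congr rfl fun i _ => ?_
        rw [Finset.mul_sum]
        refine Finset.sum_congr rfl fun j _ => ?_
        simp only [dotProduct, Complex.star_def]
        ring
    -- main identity : (R : ℂ) = 2 * quadratic form
    have main : ((R : ℝ) : ℂ) = 2 * (star x ⬝ᵥ L *ᵥ x) := by
      rw [hR]
      push_cast
      have : ∀ i j : Fin N, ((|As i j| : ℝ) : ℂ) * ((Complex.normSq (u i j) : ℝ) : ℂ)
          = ((|As i j| : ℝ) : ℂ) * ((starRingEnd ℂ) (u i j) * u i j) := by
        intro i j
        rw [← Complex.normSq_eq_conj_mul_self]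
      calc ∑ i, ∑ j, ((|As i j| : ℝ) : ℂ) * ((Complex.normSq (u i j) : ℝ) : ℂ)
          = ∑ i, ∑ j, (((|As i j| : ℝ) : ℂ) * ((starRingEnd ℂ) (x i) * x i)
            + ((|As i j| : ℝ) : ℂ) * ((starRingEnd ℂ) (x j) * x j)
            - ((As i j : ℝ) : ℂ) * Complex.exp (Complex.I * (Θ j i : ℝ)) * (x i * (starRingEnd ℂ) (x j))
            - ((As i j : ℝ) : ℂ) * Complex.exp (Complex.I * (Θ i j : ℝ)) * ((starRingEnd ℂ) (x i) * x j)) := by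
            refine Finset.sum_congr rfl fun i _ => Finset.sum_congr rfl fun j _ => ?_
            rw [this i j, hu]
            exact pointwise As Θ hΘ x i j
        _ = 2 * (star x ⬝ᵥ L *ᵥ x) := by
            rw [hQ]
            have e1 : ∑ i, ∑ j, ((|As i j| : ℝ) : ℂ) * ((starRingEnd ℂ) (x i) * x i)
                = ∑ i, ((∑ j, |As i j| : ℝ) : ℂ) * ((starRingEnd ℂ) (x i) * x i) := by
              refine Finset.sum_congr rfl fun i _ => ?_
              rw [← Finset.sum_mul]
              push_cast
              ring
            have e2 : ∑ i, ∑ j, ((|As i j| : ℝ) : ℂ) * ((starRingEnd ℂ) (x j) * x j)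
                = ∑ i, ((∑ j, |As i j| : ℝ) : ℂ) * ((starRingEnd ℂ) (x i) * x i) := by
              rw [Finset.sum_comm]
              refine Finset.sum_congr rfl fun i _ => ?_
              rw [← Finset.sum_mul]
              push_cast
              congr 1
              refine Finset.sum_congr rfl fun j _ => ?_
              rw [hAs j i]
            have e3 : ∑ i, ∑ j, ((As i j : ℝ) : ℂ) * Complex.exp (Complex.I * (Θ j i : ℝ)) * (x i * (starRingEnd ℂ) (x j))
                = ∑ i, ∑ j, ((As i j : ℝ) : ℂ) * Complex.exp (Complex.I * (Θ i j : ℝ)) * ((starRingEnd ℂ) (x i) * x j) := by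
              rw [Finset.sum_comm]
              refine Finset.sum_congr rfl fun i _ => Finset.sum_congr rfl fun j _ => ?_
              rw [hAs j i]
              ring
            simp only [Finset.sum_sub_distrib, Finset.sum_add_distrib]
            rw [e1, e2, e3]
            ring
    have hval : star x ⬝ᵥ L *ᵥ x = ((R / 2 : ℝ) : ℂ) := by
      push_cast
      linear_combination (1/2 : ℂ) * main.symm
    rw [hval]
    exact Complex.zero_le_real.mpr (by positivity)

/-- If all signed degrees are strictly positive, the normalized signed magnetic Laplacian
`L̄^q_n = D̄^{-1/2} L̄^q D̄^{-1/2}` is Hermitian positive semidefinite. -/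
theorem normalized_signed_magnetic_laplacian_posSemidef {N : ℕ}
    (As : Matrix (Fin N) (Fin N) ℝ) (hAs : ∀ i j, As i j = As j i)
    (Θ : Matrix (Fin N) (Fin N) ℝ) (hΘ : ∀ i j, Θ i j = -Θ j i)
    (hd : ∀ i, 0 < ∑ j, |As i j|)
    (L : Matrix (Fin N) (Fin N) ℂ)
    (hL : L = Matrix.diagonal (fun i => ((∑ j, |As i j| : ℝ) : ℂ)) -
      Matrix.of (fun i j => ((As i j : ℝ) : ℂ) * Complex.exp (Complex.I * (Θ i j : ℝ))))
    (Dh : Matrix (Fin N) (Fin N) ℂ)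
    (hDh : Dh = Matrix.diagonal (fun i => (((Real.sqrt (∑ j, |As i j|))⁻¹ : ℝ) : ℂ))) :
    (Dh * L * Dh).PosSemidef := by
  have hDh' : Dhᴴ = Dh := by
    rw [hDh]
    ext i j
    rcases eq_or_ne i j with rfl | h
    · simp [Complex.conj_ofReal]
    · simp [Matrix.diagonal_apply_ne, h, Ne.symm h]
  have := (lap_psd As hAs Θ hΘ L hL).mul_mul_conjTranspose_same Dh
  rwa [hDh'] at this
end

section
/- Let A be a real symmetric N×N matrix with zero diagonal, D̄ the diagonal matrix with D̄(i,i) = Σ_j |A(i,j)|, Ã = A + I, and D̃ = D̄ + I. Then the renormalized aggregation matrix P = D̃^{-1/2} Ã D̃^{-1/2} is symmetric and all its eigenvalues lie in the interval [-1, 1]. -/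
open Matrix

/-- The renormalized aggregation matrix `P = D̃^{-1/2} Ã D̃^{-1/2}` with `Ã = A + I`,
`D̃ = D̄ + I`, is symmetric and all its eigenvalues lie in `[-1, 1]`. -/
theorem renormalized_aggregation_eigenvalues {N : ℕ}
    (A : Matrix (Fin N) (Fin N) ℝ) (hA : ∀ i j, A i j = A j i)
    (hdiag : ∀ i, A i i = 0)
    (Dh : Matrix (Fin N) (Fin N) ℝ)
    (hDh : Dh = Matrix.diagonal (fun i => (Real.sqrt ((∑ j, |A i j|) + 1))⁻¹))
    (P : Matrix (Fin N) (Fin N) ℝ)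
    (hP : P = Dh * (A + 1) * Dh) :
    P.IsSymm ∧
      ∀ (μ : ℝ) (v : Fin N → ℝ), v ≠ 0 → P *ᵥ v = μ • v → -1 ≤ μ ∧ μ ≤ 1 := by
  subst hDh hP
  set f : Fin N → ℝ := fun i => (Real.sqrt ((∑ j, |A i j|) + 1))⁻¹ with hf
  set d : Fin N → ℝ := fun i => (∑ j, |A i j|) + 1 with hd
  have hdpos : ∀ i, (0:ℝ) < d i := by
    intro i
    have : (0:ℝ) ≤ ∑ j, |A i j| := Finset.sum_nonneg fun j _ => abs_nonneg _
    simp only [hd]; linarith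
  have hfsq : ∀ i, f i ^ 2 * d i = 1 := by
    intro i
    have h1 : Real.sqrt (d i) ^ 2 = d i := Real.sq_sqrt (hdpos i).le
    have h2 : f i ^ 2 = (d i)⁻¹ := by
      simp only [hf, hd, inv_pow]
      rw [h1]
    rw [h2]
    exact inv_mul_cancel₀ (hdpos i).ne'
  set Ab : Fin N → Fin N → ℝ := fun i j => A i j + if i = j then 1 else 0 with hAb
  -- entries of P
  have hPapp : ∀ i j, (Matrix.diagonal f * (A + 1) * Matrix.diagonal f) i j
      = f i * Ab i j * f j := by
    intro i j
    simp [Matrix.diagonal_mul, Matrix.mul_diagonal, Matrix.add_apply, Matrix.one_apply, hAb]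
  have hAbsymm : ∀ i j, Ab i j = Ab j i := by
    intro i j
    simp only [hAb, hA i j]
    by_cases h : i = j <;> simp [h, eq_comm]
  have hsymm : (Matrix.diagonal f * (A + 1) * Matrix.diagonal f).IsSymm := by
    apply Matrix.IsSymm.ext
    intro i j
    rw [hPapp, hPapp, hAbsymm j i]
    ring
  refine ⟨hsymm, ?_⟩
  intro μ v hv hev
  have habs : ∀ i j, |Ab i j| = |A i j| + if i = j then 1 else 0 := by
    intro i j
    by_cases h : i = j
    · subst h; simp [hAb, hdiag i]
    · simp [hAb, h]
  have habs_symm : ∀ i j, |Ab i j| = |Ab j i| := by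
    intro i j; rw [habs, habs, hA i j]
    by_cases h : i = j <;> simp [h, eq_comm]
  have hrow : ∀ i, (∑ j, |Ab i j|) = d i := by
    intro i
    simp only [habs, Finset.sum_add_distrib, hd]
    congr 1
    simp
  set w : Fin N → ℝ := fun i => f i * v i with hw
  -- quadratic form identity
  have hquad : v ⬝ᵥ ((Matrix.diagonal f * (A + 1) * Matrix.diagonal f) *ᵥ v)
      = ∑ i, ∑ j, Ab i j * w i * w j := by
    simp only [dotProduct, Matrix.mulVec, dotProduct, hPapp]
    refine Finset.sum_congr rfl fun i _ => ?_
    rw [Finset.mul_sum]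
    refine Finset.sum_congr rfl fun j _ => ?_
    simp only [hw]; ring
  -- eigenvalue equation in quadratic form
  have hS : v ⬝ᵥ v = ∑ i, v i ^ 2 := by
    simp [dotProduct, sq]
  have heig : μ * ∑ i, v i ^ 2 = ∑ i, ∑ j, Ab i j * w i * w j := by
    rw [← hS, ← hquad, hev]
    simp [dotProduct, Finset.mul_sum]
    ring_nf
  -- key bound
  have hhalf : ∀ i j, |Ab i j * w i * w j| ≤ |Ab i j| * ((w i ^ 2 + w j ^ 2) / 2) := by
    intro i j
    rw [abs_mul, abs_mul]
    have h1 : |w i| * |w j| ≤ (w i ^ 2 + w j ^ 2) / 2 := by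
      nlinarith [sq_nonneg (|w i| - |w j|), sq_abs (w i), sq_abs (w j)]
    have h2 : (0:ℝ) ≤ |Ab i j| := abs_nonneg _
    calc |Ab i j| * |w i| * |w j| = |Ab i j| * (|w i| * |w j|) := by ring
      _ ≤ |Ab i j| * ((w i ^ 2 + w j ^ 2) / 2) := by
          exact mul_le_mul_of_nonneg_left h1 h2
  have hRHS : ∑ i, ∑ j, |Ab i j| * ((w i ^ 2 + w j ^ 2) / 2) = ∑ i, v i ^ 2 := by
    have hsplit : ∀ i j, |Ab i j| * ((w i ^ 2 + w j ^ 2) / 2)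
        = |Ab i j| * w i ^ 2 / 2 + |Ab i j| * w j ^ 2 / 2 := by intro i j; ring
    simp only [hsplit, Finset.sum_add_distrib]
    have hswap : ∑ i, ∑ j, |Ab i j| * w j ^ 2 / 2 = ∑ i, ∑ j, |Ab i j| * w i ^ 2 / 2 := by
      rw [Finset.sum_comm]
      refine Finset.sum_congr rfl fun i _ => Finset.sum_congr rfl fun j _ => ?_
      rw [habs_symm i j]
    rw [hswap, ← Finset.sum_add_distrib]
    refine Finset.sum_congr rfl fun i _ => ?_
    rw [← Finset.sum_add_distrib]
    have : ∀ j, |Ab i j| * w i ^ 2 / 2 + |Ab i j| * w i ^ 2 / 2 = |Ab i j| * w i ^ 2 := by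
      intro j; ring
    simp only [this, ← Finset.sum_mul, hrow]
    have := hfsq i
    simp only [hw]
    nlinarith [this]
  have hbound : |μ * ∑ i, v i ^ 2| ≤ ∑ i, v i ^ 2 := by
    rw [heig]
    calc |∑ i, ∑ j, Ab i j * w i * w j|
        ≤ ∑ i, |∑ j, Ab i j * w i * w j| := Finset.abs_sum_le_sum_abs _ _
      _ ≤ ∑ i, ∑ j, |Ab i j * w i * w j| :=
          Finset.sum_le_sum fun i _ => Finset.abs_sum_le_sum_abs _ _
      _ ≤ ∑ i, ∑ j, |Ab i j| * ((w i ^ 2 + w j ^ 2) / 2) :=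
          Finset.sum_le_sum fun i _ => Finset.sum_le_sum fun j _ => hhalf i j
      _ = ∑ i, v i ^ 2 := hRHS
  -- positivity of ∑ v i ^ 2
  have hSpos : 0 < ∑ i, v i ^ 2 := by
    obtain ⟨i, hi⟩ := Function.ne_iff.1 hv
    exact Finset.sum_pos' (fun j _ => sq_nonneg _)
      ⟨i, Finset.mem_univ i, by rw [← sq_abs]; exact pow_pos (abs_pos.2 hi) 2⟩
  have hmu : |μ| ≤ 1 := by
    rw [abs_mul, abs_of_pos hSpos] at hbound
    have := (mul_le_iff_le_one_left hSpos).1 (by linarith [hbound] : |μ| * (∑ i, v i ^ 2) ≤ ∑ i, v i ^ 2)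
    exact this
  exact ⟨neg_le_of_abs_le hmu, le_of_abs_le hmu⟩
end

section
/- For a signed graph that is not balanced (no diagonal ±1 matrix S makes S A S entrywise nonnegative) and whose underlying unsigned graph |A| is connected, the smallest eigenvalue of the signed Laplacian L̄ = D̄ - A is strictly positive. -/
open Matrix

/-- For an unbalanced signed graph whose underlying unsigned graph is connected, the
signed Laplacian `L̄ = D̄ - A` is positive definite (its smallest eigenvalue is
strictly positive). -/
theorem unbalanced_connected_signed_laplacian_posDef {N : ℕ}
    (A : Matrix (Fin N) (Fin N) ℝ) (hA : ∀ i j, A i j = A j i)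
    (hdiag : ∀ i, A i i = 0)
    (hconn : (SimpleGraph.fromRel (fun i j : Fin N => A i j ≠ 0)).Connected)
    (hunbal : ¬ ∃ S : Fin N → ℝ, (∀ i, S i = 1 ∨ S i = -1) ∧
      ∀ i j, 0 ≤ S i * A i j * S j)
    (L : Matrix (Fin N) (Fin N) ℝ)
    (hL : L = Matrix.diagonal (fun i => ∑ j, |A i j|) - A) :
    L.PosDef := by
  classical
  subst hL
  have habs : ∀ i j, |A i j| = |A j i| := fun i j => by rw [hA]
  set t : (Fin N → ℝ) → Fin N → Fin N → ℝ :=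
    fun x i j => |A i j| * x i ^ 2 + |A i j| * x j ^ 2 - 2 * A i j * (x i * x j) with ht
  have hsplit : ∀ (x : Fin N → ℝ) i j,
      2 * t x i j = (|A i j| - A i j) * (x i + x j) ^ 2 + (|A i j| + A i j) * (x i - x j) ^ 2 := by
    intro x i j; simp only [ht]; ring
  have h1 : ∀ i j, (0:ℝ) ≤ |A i j| - A i j := fun i j => by
    have := le_abs_self (A i j); linarith
  have h2 : ∀ i j, (0:ℝ) ≤ |A i j| + A i j := fun i j => by
    have := neg_abs_le (A i j); linarith
  have htnonneg : ∀ (x : Fin N → ℝ) i j, 0 ≤ t x i j := by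
    intro x i j
    have e1 := mul_nonneg (h1 i j) (sq_nonneg (x i + x j))
    have e2 := mul_nonneg (h2 i j) (sq_nonneg (x i - x j))
    have := hsplit x i j
    linarith
  -- the quadratic form identity
  have hQ : ∀ x : Fin N → ℝ,
      2 * (x ⬝ᵥ (Matrix.diagonal (fun i => ∑ j, |A i j|) - A) *ᵥ x)
        = ∑ i, ∑ j, t x i j := by
    intro x
    have hmv : ∀ i, ((Matrix.diagonal (fun i => ∑ j, |A i j|) - A) *ᵥ x) i
        = (∑ j, |A i j|) * x i - ∑ j, A i j * x j := by
      intro i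
      simp [Matrix.mulVec, dotProduct, Matrix.sub_apply, Matrix.diagonal_apply, sub_mul,
        Finset.sum_sub_distrib, ite_mul, Finset.sum_ite_eq]
    set S1 : ℝ := ∑ i, ∑ j, |A i j| * x i ^ 2 with hS1
    set S2 : ℝ := ∑ i, ∑ j, A i j * (x i * x j) with hS2
    have hQ1 : x ⬝ᵥ (Matrix.diagonal (fun i => ∑ j, |A i j|) - A) *ᵥ x = S1 - S2 := by
      simp only [dotProduct, hmv, hS1, hS2, ← Finset.sum_sub_distrib]
      refine Finset.sum_congr rfl fun i _ => ?_
      rw [Finset.sum_sub_distrib, mul_sub]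
      congr 1
      · have : x i * ((∑ j, |A i j|) * x i) = (∑ j, |A i j|) * x i ^ 2 := by ring
        rw [this, Finset.sum_mul]
      · rw [Finset.mul_sum]
        exact Finset.sum_congr rfl fun j _ => by ring
    have hswap : S1 = ∑ i, ∑ j, |A i j| * x j ^ 2 := by
      rw [hS1, Finset.sum_comm]
      exact Finset.sum_congr rfl fun i _ => Finset.sum_congr rfl fun j _ => by rw [habs]
    have hexp : ∑ i, ∑ j, t x i j
        = S1 + (∑ i, ∑ j, |A i j| * x j ^ 2) - ∑ i, ∑ j, 2 * A i j * (x i * x j) := by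
      simp only [ht, Finset.sum_add_distrib, Finset.sum_sub_distrib, hS1]
    have h2S2 : ∑ i, ∑ j, 2 * A i j * (x i * x j) = 2 * S2 := by
      rw [hS2, Finset.mul_sum]
      refine Finset.sum_congr rfl fun i _ => ?_
      rw [Finset.mul_sum]
      exact Finset.sum_congr rfl fun j _ => by ring
    rw [hQ1, hexp, ← hswap, h2S2]
    ring
  refine Matrix.PosDef.of_dotProduct_mulVec_pos ?_ ?_
  · -- Hermitian
    ext i j
    simp only [Matrix.conjTranspose_apply, Matrix.sub_apply, Matrix.diagonal_apply, star_sub,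
      RCLike.star_def, starRingEnd_apply, star_trivial]
    rw [hA j i]
    by_cases h : i = j
    · subst h; simp
    · rw [if_neg h, if_neg (Ne.symm h)]
  · intro x hx
    rw [show star x = x from star_trivial x]
    by_contra hcon
    push_neg at hcon
    -- the total quadratic form is zero, hence every term vanishes
    have hsum0 : ∑ i, ∑ j, t x i j = 0 := by
      have hge : 0 ≤ ∑ i, ∑ j, t x i j :=
        Finset.sum_nonneg fun i _ => Finset.sum_nonneg fun j _ => htnonneg x i j
      have := hQ x
      linarith
    have hzero : ∀ i j, t x i j = 0 := by
      intro i j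
      have houter :=
        (Finset.sum_eq_zero_iff_of_nonneg
          (fun i _ => Finset.sum_nonneg fun j _ => htnonneg x i j)).mp hsum0 i (Finset.mem_univ i)
      exact (Finset.sum_eq_zero_iff_of_nonneg
        (fun j _ => htnonneg x i j)).mp houter j (Finset.mem_univ j)
    have hedge : ∀ i j, A i j ≠ 0 → (x i = x j ∨ x i = -x j) ∧ 0 ≤ A i j * (x i * x j) := by
      intro i j hij
      have a1 := mul_nonneg (h1 i j) (sq_nonneg (x i + x j))
      have a2 := mul_nonneg (h2 i j) (sq_nonneg (x i - x j))
      have hs := hsplit x i j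
      have hz := hzero i j
      have e1 : (|A i j| - A i j) * (x i + x j) ^ 2 = 0 := by linarith
      have e2 : (|A i j| + A i j) * (x i - x j) ^ 2 = 0 := by linarith
      rcases lt_trichotomy (A i j) 0 with hlt | heq | hgt
      · have habs' : |A i j| = -A i j := abs_of_neg hlt
        have hpos : 0 < |A i j| - A i j := by rw [habs']; linarith
        have hsq : (x i + x j) ^ 2 = 0 := by
          rcases mul_eq_zero.mp e1 with h | h
          · exact absurd h (ne_of_gt hpos)
          · exact h
        have hx' : x i = -x j := by
          have := sq_eq_zero_iff.mp hsq; linarith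
        refine ⟨Or.inr hx', ?_⟩
        rw [hx']
        nlinarith [sq_nonneg (x j)]
      · exact absurd heq hij
      · have habs' : |A i j| = A i j := abs_of_pos hgt
        have hpos : 0 < |A i j| + A i j := by rw [habs']; linarith
        have hsq : (x i - x j) ^ 2 = 0 := by
          rcases mul_eq_zero.mp e2 with h | h
          · exact absurd h (ne_of_gt hpos)
          · exact h
        have hx' : x i = x j := by
          have := sq_eq_zero_iff.mp hsq; linarith
        refine ⟨Or.inl hx', ?_⟩
        rw [hx']
        nlinarith [sq_nonneg (x j)]
    have hedgeabs : ∀ i j, A i j ≠ 0 → |x i| = |x j| := by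
      intro i j h
      rcases (hedge i j h).1 with h' | h' <;> rw [h'] <;> simp
    have hadj : ∀ i j : Fin N, (SimpleGraph.fromRel (fun i j : Fin N => A i j ≠ 0)).Adj i j →
        |x i| = |x j| := by
      intro i j h
      rcases h with ⟨hne, h | h⟩
      · exact hedgeabs i j h
      · exact (hedgeabs j i h).symm
    have hreach : ∀ i j : Fin N, |x i| = |x j| := by
      intro i j
      obtain ⟨w⟩ := hconn.preconnected i j
      induction w with
      | nil => rfl
      | cons h p ih => exact (hadj _ _ h).trans ih
    obtain ⟨i0, hi0⟩ := Function.ne_iff.mp hx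
    simp only [Pi.zero_apply] at hi0
    have hcpos : 0 < |x i0| := abs_pos.mpr hi0
    set c : ℝ := |x i0| with hc
    have hcne : c ≠ 0 := ne_of_gt hcpos
    apply hunbal
    refine ⟨fun i => x i / c, fun i => ?_, fun i j => ?_⟩
    · have : |x i| = c := hreach i i0
      rcases abs_eq (le_of_lt hcpos) |>.mp this with h | h
      · left; show x i / c = 1; rw [h]; field_simp
      · right; show x i / c = -1; rw [h]; field_simp
    · by_cases h : A i j = 0
      · simp [h]
      · have hnn := (hedge i j h).2
        have : x i / c * A i j * (x j / c) = A i j * (x i * x j) / c ^ 2 := by ring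
        rw [this]
        exact div_nonneg hnn (sq_nonneg c)
end

section
/- Let A_s be real symmetric, Θ real antisymmetric, and write the real part of the quadratic form of L̄^q = D̄ - A_s ⊙ exp(ιΘ) as Re(x† L̄^q x). Then Re(x† L̄^q x) ≥ (1/2) Σ_{m,n} |A_s(m,n)| (|x(m)| - |x(n)|)² for every x ∈ ℂ^N. -/
open Matrix Complex

/-- Key inequality for positive semidefiniteness of the signed magnetic Laplacian:
`Re(x† L̄^q x) ≥ (1/2) Σ_{m,n} |A_s(m,n)| (|x(m)| - |x(n)|)²`. -/
theorem signed_magnetic_laplacian_key_inequality {N : ℕ}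
    (As : Matrix (Fin N) (Fin N) ℝ) (hAs : ∀ i j, As i j = As j i)
    (Θ : Matrix (Fin N) (Fin N) ℝ) (hΘ : ∀ i j, Θ i j = -Θ j i)
    (L : Matrix (Fin N) (Fin N) ℂ)
    (hL : L = Matrix.diagonal (fun i => ((∑ j, |As i j| : ℝ) : ℂ)) -
      Matrix.of (fun i j => ((As i j : ℝ) : ℂ) * Complex.exp (Complex.I * (Θ i j : ℝ)))) :
    ∀ x : Fin N → ℂ,
      (1 / 2) * ∑ m, ∑ n, |As m n| * (‖x m‖ - ‖x n‖) ^ 2 ≤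
        (star x ⬝ᵥ L *ᵥ x).re := by
  intro x
  subst hL
  set a : Fin N → ℝ := fun m => ‖x m‖ with ha
  set B : Matrix (Fin N) (Fin N) ℂ :=
    Matrix.of (fun i j => ((As i j : ℝ) : ℂ) * Complex.exp (Complex.I * (Θ i j : ℝ))) with hB
  have hsplit : (star x ⬝ᵥ
      (Matrix.diagonal (fun i => ((∑ j, |As i j| : ℝ) : ℂ)) - B) *ᵥ x)
      = star x ⬝ᵥ (Matrix.diagonal (fun i => ((∑ j, |As i j| : ℝ) : ℂ)) *ᵥ x)
        - star x ⬝ᵥ (B *ᵥ x) := by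
    rw [sub_mulVec, dotProduct_sub]
  have hD : (star x ⬝ᵥ (Matrix.diagonal (fun i => ((∑ j, |As i j| : ℝ) : ℂ)) *ᵥ x)).re
      = ∑ m, ∑ n, |As m n| * a m ^ 2 := by
    simp only [dotProduct, mulVec_diagonal, Complex.re_sum, Pi.star_apply]
    apply Finset.sum_congr rfl
    intro m _
    have : star (x m) * (((∑ j, |As m j| : ℝ) : ℂ) * x m)
        = ((((∑ j, |As m j|) * Complex.normSq (x m) : ℝ)) : ℂ) := by
      rw [show star (x m) * (((∑ j, |As m j| : ℝ) : ℂ) * x m)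
          = ((∑ j, |As m j| : ℝ) : ℂ) * (x m * (starRingEnd ℂ) (x m)) by
        simp only [RCLike.star_def]; ring]
      rw [Complex.mul_conj]
      norm_cast
    rw [this, Complex.ofReal_re, ← Complex.sq_norm, Finset.sum_mul]
  have hBre : (star x ⬝ᵥ (B *ᵥ x)).re
      = ∑ m, ∑ n, (star (x m) * (B m n * x n)).re := by
    simp only [dotProduct, mulVec, Complex.re_sum, Finset.mul_sum, Pi.star_apply]
  have htermbound : ∀ m n, (star (x m) * (B m n * x n)).re ≤ |As m n| * (a m * a n) := by
    intro m n
    calc (star (x m) * (B m n * x n)).re ≤ ‖star (x m) * (B m n * x n)‖ :=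
          Complex.re_le_norm _
      _ = a m * (|As m n| * 1 * a n) := by
          simp [hB, _root_.map_mul, Complex.norm_conj, Complex.norm_exp, Complex.norm_real, ha,
            Complex.mul_re, Complex.I_re, Complex.I_im]
      _ = |As m n| * (a m * a n) := by ring
  have hBsum : (star x ⬝ᵥ (B *ᵥ x)).re ≤ ∑ m, ∑ n, |As m n| * (a m * a n) := by
    rw [hBre]
    exact Finset.sum_le_sum fun m _ => Finset.sum_le_sum fun n _ => htermbound m n
  have hsym : ∑ m, ∑ n, |As m n| * a n ^ 2 = ∑ m, ∑ n, |As m n| * a m ^ 2 := by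
    rw [Finset.sum_comm]
    apply Finset.sum_congr rfl; intro m _; apply Finset.sum_congr rfl; intro n _
    rw [hAs n m]
  have hexpand : (1 / 2) * ∑ m, ∑ n, |As m n| * (a m - a n) ^ 2
      = ∑ m, ∑ n, |As m n| * a m ^ 2 - ∑ m, ∑ n, |As m n| * (a m * a n) := by
    have : ∀ m n, |As m n| * (a m - a n) ^ 2
        = |As m n| * a m ^ 2 + |As m n| * a n ^ 2 - 2 * (|As m n| * (a m * a n)) := by
      intro m n; ring
    simp_rw [this, Finset.sum_sub_distrib, Finset.sum_add_distrib, ← Finset.mul_sum]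
    rw [hsym]; ring
  rw [hsplit, Complex.sub_re, hD, hexpand]
  linarith [hBsum]
end
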